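/- arXiv:1109.6394 — 3 statements merged into one kernel-verified Lean document; each statement's English description precedes it below -/
import Mathlib

section
/- Let n, m ≥ 1 and let P, Q be n-dimensional linear subspaces of ℝ^{n+m}. Let (e_1,…,e_n) be an orthonormal basis of P and (f_1,…,f_n) an orthonormal basis of Q, and let W = (⟨e_i, f_j⟩)_{1≤i,j≤n} be the associated W-matrix. Then the following statements are equivalent: (a) dim(P ∩ Q) = n − 1 and det W = 0; (b) dim(P + Q) = n + 1 and det W = 0; (c) the matrix WᵀW has eigenvalue 1 with multiplicity n − 1 and eigenvalue 0 with multiplicity 1 (equivalently, WᵀW is an idempotent symmetric matrix of rank n − 1); (e) there exist orthonormal vectors u_1, u_2, …, u_n, u_{n+1} in ℝ^{n+m} such that P = span(u_1, u_2, …, u_n) and Q = span(u_{n+1}, u_2, …, u_n). (All four conditions are independent of the chosen orthonormal bases, since |det W| and the eigenvalues of WᵀW do not depend on these choices.) -/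
noncomputable section

open Module Matrix RealInnerProductSpace

/-- The `W`-matrix `(⟨e_i, f_j⟩)` of two families of vectors in a Euclidean space. -/
def Wmatrix {n N : ℕ} (e f : Fin n → EuclideanSpace ℝ (Fin N)) : Matrix (Fin n) (Fin n) ℝ :=
  Matrix.of fun i j => (inner ℝ (e i) (f j) : ℝ)

namespace SOrth

variable {N k : ℕ}

lemma inner_span_eq_zero {v : Fin k → EuclideanSpace ℝ (Fin N)} {d w : EuclideanSpace ℝ (Fin N)}
    (h : ∀ i, ⟪v i, d⟫ = 0) (hw : w ∈ Submodule.span ℝ (Set.range v)) : ⟪w, d⟫ = 0 := by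
  induction hw using Submodule.span_induction with
  | mem x hx => obtain ⟨i, rfl⟩ := hx; exact h i
  | zero => simp
  | add x y _ _ hx hy => rw [inner_add_left, hx, hy, add_zero]
  | smul c x _ hx => rw [inner_smul_left, hx, mul_zero]

lemma orthonormal_span_expand {v : Fin k → EuclideanSpace ℝ (Fin N)}
    (hv : Orthonormal ℝ v) {w : EuclideanSpace ℝ (Fin N)}
    (hw : w ∈ Submodule.span ℝ (Set.range v)) : w = ∑ i, ⟪v i, w⟫ • v i := by
  set p : EuclideanSpace ℝ (Fin N) := ∑ i, ⟪v i, w⟫ • v i with hp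
  have hpmem : p ∈ Submodule.span ℝ (Set.range v) :=
    Submodule.sum_mem _ fun i _ => Submodule.smul_mem _ _ (Submodule.subset_span ⟨i, rfl⟩)
  have hd : ∀ i, ⟪v i, w - p⟫ = 0 := by
    intro i
    rw [inner_sub_right, hp, hv.inner_right_fintype]
    ring
  have h0 : ⟪w - p, w - p⟫ = 0 :=
    inner_span_eq_zero hd (Submodule.sub_mem _ hw hpmem)
  have := inner_self_eq_zero.mp h0
  rw [sub_eq_zero] at this
  exact this

lemma parseval {v : Fin k → EuclideanSpace ℝ (Fin N)}
    (hv : Orthonormal ℝ v) {w₁ : EuclideanSpace ℝ (Fin N)}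
    (hw₁ : w₁ ∈ Submodule.span ℝ (Set.range v)) (w₂ : EuclideanSpace ℝ (Fin N)) :
    ⟪w₁, w₂⟫ = ∑ i, ⟪v i, w₁⟫ * ⟪v i, w₂⟫ := by
  conv_lhs => rw [orthonormal_span_expand hv hw₁]
  rw [sum_inner]
  exact Finset.sum_congr rfl fun i _ => real_inner_smul_left _ _ _

lemma wmatrix_mulVec (e f : Fin k → EuclideanSpace ℝ (Fin N)) (x : Fin k → ℝ) (i : Fin k) :
    (Wmatrix e f).mulVec x i = ⟪e i, ∑ j, x j • f j⟫ := by
  rw [inner_sum]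
  simp only [real_inner_smul_right]
  simp only [Wmatrix, mulVec, dotProduct, Matrix.of_apply]
  exact Finset.sum_congr rfl fun j _ => mul_comm _ _



/-- the linear map sending coefficients to the linear combination -/
def lincomb (f : Fin k → EuclideanSpace ℝ (Fin N)) :
    (Fin k → ℝ) →ₗ[ℝ] EuclideanSpace ℝ (Fin N) where
  toFun x := ∑ j, x j • f j
  map_add' x y := by simp [add_smul, Finset.sum_add_distrib]
  map_smul' c x := by simp [smul_smul, Finset.smul_sum]

lemma lincomb_apply (f : Fin k → EuclideanSpace ℝ (Fin N)) (x : Fin k → ℝ) :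
    lincomb f x = ∑ j, x j • f j := rfl

lemma lincomb_mem (f : Fin k → EuclideanSpace ℝ (Fin N)) (x : Fin k → ℝ) :
    lincomb f x ∈ Submodule.span ℝ (Set.range f) := by
  rw [lincomb_apply]
  exact Submodule.sum_mem _ fun j _ =>
    Submodule.smul_mem _ _ (Submodule.subset_span (Set.mem_range_self j))

lemma lincomb_injective {f : Fin k → EuclideanSpace ℝ (Fin N)} (hf : Orthonormal ℝ f) :
    Function.Injective (lincomb f) := by
  intro x y hxy
  funext j
  have hx := hf.inner_right_fintype x j
  have hy := hf.inner_right_fintype y j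
  rw [← hx, ← hy]
  rw [lincomb_apply, lincomb_apply] at hxy
  rw [hxy]

lemma inner_lincomb_self {f : Fin k → EuclideanSpace ℝ (Fin N)} (hf : Orthonormal ℝ f)
    (x y : Fin k → ℝ) : ⟪lincomb f x, lincomb f y⟫ = x ⬝ᵥ y := by
  rw [lincomb_apply, sum_inner]
  simp only [real_inner_smul_left, lincomb_apply, hf.inner_right_fintype]
  rfl

/-- `q ⊥ P` when `W x = 0`. -/
lemma lincomb_mem_orthogonal {e f : Fin k → EuclideanSpace ℝ (Fin N)}
    (x : Fin k → ℝ) (hx : (Wmatrix e f).mulVec x = 0) :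
    lincomb f x ∈ (Submodule.span ℝ (Set.range e))ᗮ := by
  rw [Submodule.mem_orthogonal]
  intro w hw
  refine inner_span_eq_zero (fun i => ?_) hw
  rw [lincomb_apply, ← wmatrix_mulVec e f x i, hx]
  rfl

/-- `q ∈ P` when `WᵀW x = x`. -/
lemma lincomb_mem_span_left {e f : Fin k → EuclideanSpace ℝ (Fin N)}
    (he : Orthonormal ℝ e) (hf : Orthonormal ℝ f)
    (x : Fin k → ℝ) (hx : ((Wmatrix e f)ᵀ * Wmatrix e f).mulVec x = x) :
    lincomb f x ∈ Submodule.span ℝ (Set.range e) := by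
  set W := Wmatrix e f with hW
  set q := lincomb f x with hq
  set p := lincomb e (W.mulVec x) with hp
  have hpmem : p ∈ Submodule.span ℝ (Set.range e) := lincomb_mem e _
  have hinner : ∀ i, ⟪e i, q - p⟫ = 0 := by
    intro i
    rw [inner_sub_right]
    have h1 : ⟪e i, q⟫ = W.mulVec x i := (wmatrix_mulVec e f x i).symm
    have h2 : ⟪e i, p⟫ = W.mulVec x i := by
      rw [hp, lincomb_apply, he.inner_right_fintype]
    rw [h1, h2, sub_self]
  have hpd : ⟪p, q - p⟫ = 0 := inner_span_eq_zero hinner hpmem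
  -- norms
  have hqq : ⟪q, q⟫ = x ⬝ᵥ x := inner_lincomb_self hf x x
  have hpp : ⟪p, p⟫ = W.mulVec x ⬝ᵥ W.mulVec x := inner_lincomb_self he _ _
  have hWx : W.mulVec x ⬝ᵥ W.mulVec x = x ⬝ᵥ x := by
    calc W.mulVec x ⬝ᵥ W.mulVec x = (x ᵥ* Wᵀ) ⬝ᵥ W.mulVec x := by rw [Matrix.vecMul_transpose]
    _ = x ⬝ᵥ Wᵀ.mulVec (W.mulVec x) := (Matrix.dotProduct_mulVec x Wᵀ _).symm
    _ = x ⬝ᵥ (Wᵀ * W).mulVec x := by rw [Matrix.mulVec_mulVec]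
    _ = x ⬝ᵥ x := by rw [hx]
  have hd0 : ⟪q - p, q - p⟫ = 0 := by
    have hexp : ⟪q, q⟫ = ⟪p, p⟫ + 2 * ⟪p, q - p⟫ + ⟪q - p, q - p⟫ := by
      have : q = p + (q - p) := by abel
      conv_lhs => rw [this]
      rw [inner_add_add_self]
      rw [real_inner_comm (q - p) p]
      ring
    rw [hqq, hpp, hWx, hpd] at hexp
    linarith
  have : q - p = 0 := inner_self_eq_zero.mp hd0
  rw [sub_eq_zero] at this
  rw [this]; exact hpmem


lemma wmatrix_orthogonal {v w : Fin k → EuclideanSpace ℝ (Fin N)}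
    (hv : Orthonormal ℝ v) (hw : Orthonormal ℝ w)
    (hmem : ∀ i, w i ∈ Submodule.span ℝ (Set.range v)) :
    (Wmatrix v w)ᵀ * Wmatrix v w = 1 := by
  ext i j
  rw [Matrix.mul_apply, Matrix.one_apply]
  calc ∑ x, (Wmatrix v w)ᵀ i x * Wmatrix v w x j
      = ∑ x, ⟪v x, w i⟫ * ⟪v x, w j⟫ := rfl
    _ = ⟪w i, w j⟫ := (parseval hv (hmem i) (w j)).symm
    _ = if i = j then 1 else 0 := orthonormal_iff_ite.mp hw i j

lemma wmatrix_base_change {e e' f f' : Fin k → EuclideanSpace ℝ (Fin N)}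
    (he' : Orthonormal ℝ e') (hf' : Orthonormal ℝ f')
    (hee : ∀ i, e i ∈ Submodule.span ℝ (Set.range e'))
    (hff : ∀ j, f j ∈ Submodule.span ℝ (Set.range f')) :
    Wmatrix e f = (Wmatrix e' e)ᵀ * (Wmatrix e' f' * Wmatrix f' f) := by
  ext i j
  rw [Matrix.mul_apply]
  have hmid : ∀ x : Fin k, (Wmatrix e' f' * Wmatrix f' f) x j = ⟪e' x, f j⟫ := by
    intro x
    rw [Matrix.mul_apply]
    have h1 : ⟪f j, e' x⟫ = ∑ l, ⟪f' l, f j⟫ * ⟪f' l, e' x⟫ := parseval hf' (hff j) (e' x)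
    calc ∑ l, Wmatrix e' f' x l * Wmatrix f' f l j
        = ∑ l, ⟪f' l, f j⟫ * ⟪f' l, e' x⟫ := by
          refine Finset.sum_congr rfl fun l _ => ?_
          show ⟪e' x, f' l⟫ * ⟪f' l, f j⟫ = _
          rw [real_inner_comm (e' x) (f' l)]
          ring
      _ = ⟪f j, e' x⟫ := h1.symm
      _ = ⟪e' x, f j⟫ := real_inner_comm _ _
  calc (Wmatrix e f : Matrix (Fin k) (Fin k) ℝ) i j
      = ⟪e i, f j⟫ := rfl
    _ = ∑ x, ⟪e' x, e i⟫ * ⟪e' x, f j⟫ := parseval he' (hee i) (f j)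
    _ = ∑ x, (Wmatrix e' e)ᵀ i x * (Wmatrix e' f' * Wmatrix f' f) x j := by
        refine Finset.sum_congr rfl fun x _ => ?_
        rw [hmid x]
        rfl

end SOrth

set_option maxHeartbeats 1000000 in
/-- Equivalent characterizations of **S-orthogonality** (Proposition 2.1) of two
`n`-dimensional subspaces `P, Q ⊆ ℝ^{n+m}`:
(a) `dim(P ∩ Q) = n − 1` and `det W = 0`;
(b) `dim(P + Q) = n + 1` and `det W = 0`;
(c) `WᵀW` is idempotent (symmetric) of rank `n − 1`;
(e) there are orthonormal vectors `u_1, …, u_{n+1}` with `P = span(u_1, …, u_n)` and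
`Q = span(u_{n+1}, u_2, …, u_n)`. -/
theorem s_orthogonal_tfae {n m : ℕ} (hn : 1 ≤ n) (hm : 1 ≤ m)
    (P Q : Submodule ℝ (EuclideanSpace ℝ (Fin (n + m))))
    (hP : finrank ℝ P = n) (hQ : finrank ℝ Q = n)
    (e f : Fin n → EuclideanSpace ℝ (Fin (n + m)))
    (he : Orthonormal ℝ e) (hf : Orthonormal ℝ f)
    (heP : P = Submodule.span ℝ (Set.range e))
    (hfQ : Q = Submodule.span ℝ (Set.range f)) :
    List.TFAE
      [ finrank ℝ ↥(P ⊓ Q) = n - 1 ∧ (Wmatrix e f).det = 0,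
        finrank ℝ ↥(P ⊔ Q) = n + 1 ∧ (Wmatrix e f).det = 0,
        ((Wmatrix e f)ᵀ * Wmatrix e f) * ((Wmatrix e f)ᵀ * Wmatrix e f) =
            (Wmatrix e f)ᵀ * Wmatrix e f ∧
          ((Wmatrix e f)ᵀ * Wmatrix e f).rank = n - 1,
        ∃ u : Fin (n + 1) → EuclideanSpace ℝ (Fin (n + m)), Orthonormal ℝ u ∧
          P = Submodule.span ℝ (Set.range fun i : Fin n => u i.castSucc) ∧
          Q = Submodule.span ℝ (Set.range fun i : Fin n =>
            if (i : ℕ) = 0 then u (Fin.last n) else u i.castSucc) ] := by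
  have hdim := Submodule.finrank_sup_add_finrank_inf_eq P Q
  rw [hP, hQ] at hdim
  have hinf_le : finrank ℝ ↥(P ⊓ Q) ≤ n := by
    have h := Submodule.finrank_mono (inf_le_right : P ⊓ Q ≤ Q)
    omega
  tfae_have 1 → 2 := by
    rintro ⟨h1, h2⟩
    refine ⟨?_, h2⟩
    omega
  tfae_have 2 → 1 := by
    rintro ⟨h1, h2⟩
    refine ⟨?_, h2⟩
    omega
  tfae_have 1 → 4 := by
    rintro ⟨h1, h2⟩
    obtain ⟨x, hx0, hWx⟩ := (Matrix.exists_mulVec_eq_zero_iff (M := Wmatrix e f)).mpr h2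
    have hq0 : SOrth.lincomb f x ≠ 0 := fun h =>
      hx0 (SOrth.lincomb_injective hf (by rw [h, map_zero]))
    have hqQ : SOrth.lincomb f x ∈ Q := by rw [hfQ]; exact SOrth.lincomb_mem f x
    have hqP : SOrth.lincomb f x ∈ Pᗮ := by rw [heP]; exact SOrth.lincomb_mem_orthogonal x hWx
    set un : EuclideanSpace ℝ (Fin (n + m)) := ‖SOrth.lincomb f x‖⁻¹ • SOrth.lincomb f x with hun
    have hunQ : un ∈ Q := Submodule.smul_mem _ _ hqQ
    have hunP : un ∈ Pᗮ := Submodule.smul_mem _ _ hqP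
    have hun1 : ‖un‖ = 1 := norm_smul_inv_norm hq0
    have hKdim : finrank ℝ ↥((P ⊓ Q)ᗮ ⊓ P) = 1 := by
      have hh := Submodule.finrank_add_inf_finrank_orthogonal (inf_le_left : P ⊓ Q ≤ P)
      rw [hP, h1] at hh
      omega
    have hKne : ((P ⊓ Q)ᗮ ⊓ P) ≠ ⊥ := by
      intro hbot
      rw [hbot, finrank_bot] at hKdim
      omega
    obtain ⟨w, hwK, hw0⟩ := Submodule.exists_mem_ne_zero_of_ne_bot hKne
    set u0 : EuclideanSpace ℝ (Fin (n + m)) := ‖w‖⁻¹ • w with hu0def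
    have hu0K : u0 ∈ (P ⊓ Q)ᗮ ⊓ P := Submodule.smul_mem _ _ hwK
    have hu01 : ‖u0‖ = 1 := norm_smul_inv_norm hw0
    set ob := (stdOrthonormalBasis ℝ ↥(P ⊓ Q)).reindex (finCongr (by rw [h1])) with hob
    set v : Fin (n - 1) → EuclideanSpace ℝ (Fin (n + m)) :=
      fun k => ((ob k : ↥(P ⊓ Q)) : EuclideanSpace ℝ (Fin (n + m))) with hv
    have hvon : Orthonormal ℝ v := ob.orthonormal.comp_linearIsometry (P ⊓ Q).subtypeₗᵢ
    have hvmem : ∀ k, v k ∈ P ⊓ Q := fun k => (ob k).2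
    set u : Fin (n + 1) → EuclideanSpace ℝ (Fin (n + m)) := fun i =>
      if h0 : (i : ℕ) = 0 then u0 else if hin : (i : ℕ) = n then un
      else v ⟨(i : ℕ) - 1, by have := i.isLt; omega⟩ with hudef
    have hu_zero : ∀ i : Fin (n + 1), (i : ℕ) = 0 → u i = u0 := by
      intro i h
      simp only [hudef]
      exact dif_pos h
    have hu_last : ∀ i : Fin (n + 1), (i : ℕ) = n → u i = un := by
      intro i h
      have h0 : ¬(i : ℕ) = 0 := by omega
      simp only [hudef]
      rw [dif_neg h0, dif_pos h]
    have hu_mid : ∀ (i : Fin (n + 1)) (h0 : ¬(i : ℕ) = 0) (hin : ¬(i : ℕ) = n),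
        u i = v ⟨(i : ℕ) - 1, by have := i.isLt; omega⟩ := by
      intro i h0 hin
      simp only [hudef]
      rw [dif_neg h0, dif_neg hin]
    -- inner product facts
    have hvu0 : ∀ k, ⟪v k, u0⟫ = 0 := fun k =>
      (Submodule.mem_orthogonal _ _).mp hu0K.1 _ (hvmem k)
    have hu0un : ⟪u0, un⟫ = 0 := (Submodule.mem_orthogonal _ _).mp hunP u0 hu0K.2
    have hvun : ∀ k, ⟪v k, un⟫ = 0 := fun k =>
      (Submodule.mem_orthogonal _ _).mp hunP _ (hvmem k).1
    have huon : Orthonormal ℝ u := by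
      rw [orthonormal_iff_ite]
      intro i j
      by_cases hi0 : (i : ℕ) = 0
      · by_cases hj0 : (j : ℕ) = 0
        · have hij : i = j := Fin.ext (by omega)
          rw [hu_zero i hi0, hu_zero j hj0, if_pos hij, real_inner_self_eq_norm_mul_norm, hu01]
          norm_num
        · have hij : i ≠ j := fun h => hj0 (by rw [← h]; exact hi0)
          rw [if_neg hij, hu_zero i hi0]
          by_cases hjn : (j : ℕ) = n
          · rw [hu_last j hjn]
            exact hu0un
          · rw [hu_mid j hj0 hjn, real_inner_comm]
            exact hvu0 _
      · by_cases hin : (i : ℕ) = n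
        · by_cases hj0 : (j : ℕ) = 0
          · have hij : i ≠ j := fun h => hi0 (by rw [h]; exact hj0)
            rw [if_neg hij, hu_last i hin, hu_zero j hj0, real_inner_comm]
            exact hu0un
          · by_cases hjn : (j : ℕ) = n
            · have hij : i = j := Fin.ext (by omega)
              rw [if_pos hij, hu_last i hin, hu_last j hjn,
                real_inner_self_eq_norm_mul_norm, hun1]
              norm_num
            · have hij : i ≠ j := fun h => hjn (by rw [← h]; exact hin)
              rw [if_neg hij, hu_last i hin, hu_mid j hj0 hjn, real_inner_comm]
              exact hvun _
        · by_cases hj0 : (j : ℕ) = 0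
          · have hij : i ≠ j := fun h => hi0 (by rw [h]; exact hj0)
            rw [if_neg hij, hu_mid i hi0 hin, hu_zero j hj0]
            exact hvu0 _
          · by_cases hjn : (j : ℕ) = n
            · have hij : i ≠ j := fun h => hin (by rw [h]; exact hjn)
              rw [if_neg hij, hu_mid i hi0 hin, hu_last j hjn]
              exact hvun _
            · rw [hu_mid i hi0 hin, hu_mid j hj0 hjn, orthonormal_iff_ite.mp hvon]
              by_cases hij : i = j
              · subst hij
                simp
              · have hne : (⟨(i : ℕ) - 1, by have := i.isLt; omega⟩ : Fin (n - 1))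
                    ≠ ⟨(j : ℕ) - 1, by have := j.isLt; omega⟩ := by
                  intro hc
                  apply hij
                  have hvv := congrArg Fin.val hc
                  simp only [] at hvv
                  exact Fin.ext (by omega)
                simp [hne, hij]
    have hPeq : P = Submodule.span ℝ (Set.range fun i : Fin n => u i.castSucc) := by
      have hmemP : ∀ i : Fin n, u i.castSucc ∈ P := by
        intro i
        by_cases h0 : (i : ℕ) = 0
        · rw [hu_zero i.castSucc (by simpa using h0)]
          exact hu0K.2
        · have hin : ¬((i.castSucc : ℕ) = n) := by
            have := i.isLt
            simp only [Fin.coe_castSucc]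
            omega
          rw [hu_mid i.castSucc (by simpa using h0) hin]
          exact (hvmem _).1
      have hle : Submodule.span ℝ (Set.range fun i : Fin n => u i.castSucc) ≤ P := by
        rw [Submodule.span_le]
        rintro y ⟨i, rfl⟩
        exact hmemP i
      have honsub : Orthonormal ℝ (fun i : Fin n => u i.castSucc) :=
        huon.comp _ (Fin.castSucc_injective n)
      have hrk : finrank ℝ ↥(Submodule.span ℝ (Set.range fun i : Fin n => u i.castSucc)) = n := by
        rw [finrank_span_eq_card honsub.linearIndependent, Fintype.card_fin]
      exact (Submodule.eq_of_le_of_finrank_le hle (le_of_eq (hP.trans hrk.symm))).symm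
    have hQeq : Q = Submodule.span ℝ (Set.range fun i : Fin n =>
        if (i : ℕ) = 0 then u (Fin.last n) else u i.castSucc) := by
      have hmemQ : ∀ i : Fin n,
          (if (i : ℕ) = 0 then u (Fin.last n) else u i.castSucc) ∈ Q := by
        intro i
        by_cases h0 : (i : ℕ) = 0
        · rw [if_pos h0, hu_last (Fin.last n) (Fin.val_last n)]
          exact hunQ
        · rw [if_neg h0]
          have hin : ¬((i.castSucc : ℕ) = n) := by
            have := i.isLt
            simp only [Fin.coe_castSucc]
            omega
          rw [hu_mid i.castSucc (by simpa using h0) hin]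
          exact (hvmem _).2
      have hle : Submodule.span ℝ (Set.range fun i : Fin n =>
          if (i : ℕ) = 0 then u (Fin.last n) else u i.castSucc) ≤ Q := by
        rw [Submodule.span_le]
        rintro y ⟨i, rfl⟩
        exact hmemQ i
      have honsub : Orthonormal ℝ (fun i : Fin n =>
          if (i : ℕ) = 0 then u (Fin.last n) else u i.castSucc) := by
        have hgeq : (fun i : Fin n => if (i : ℕ) = 0 then u (Fin.last n) else u i.castSucc)
            = u ∘ (fun i : Fin n => if (i : ℕ) = 0 then Fin.last n else i.castSucc) := by
          funext i
          by_cases h : (i : ℕ) = 0 <;> simp [h]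
        rw [hgeq]
        refine huon.comp _ ?_
        intro a b hab
        by_cases ha : (a : ℕ) = 0 <;> by_cases hb : (b : ℕ) = 0 <;> simp [ha, hb] at hab
        · exact Fin.ext (by omega)
        · have hvv := congrArg Fin.val hab
          simp [Fin.val_last] at hvv
          have := b.isLt
          omega
        · exact hab
      have hrk : finrank ℝ ↥(Submodule.span ℝ (Set.range fun i : Fin n =>
          if (i : ℕ) = 0 then u (Fin.last n) else u i.castSucc)) = n := by
        rw [finrank_span_eq_card honsub.linearIndependent, Fintype.card_fin]
      exact (Submodule.eq_of_le_of_finrank_le hle (le_of_eq (hQ.trans hrk.symm))).symm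
    exact ⟨u, huon, hPeq, hQeq⟩
  tfae_have 4 → 3 := by
    rintro ⟨u, hu, hPu, hQu⟩
    set e' : Fin n → EuclideanSpace ℝ (Fin (n + m)) := fun i => u i.castSucc with he'def
    set f'' : Fin n → EuclideanSpace ℝ (Fin (n + m)) :=
      fun i => if (i : ℕ) = 0 then u (Fin.last n) else u i.castSucc with hf''def
    have he' : Orthonormal ℝ e' := hu.comp _ (Fin.castSucc_injective n)
    have hf'' : Orthonormal ℝ f'' := by
      have hgeq : f'' = u ∘ (fun i : Fin n => if (i : ℕ) = 0 then Fin.last n else i.castSucc) := by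
        funext i
        by_cases h : (i : ℕ) = 0 <;> simp [hf''def, h]
      rw [hgeq]
      refine hu.comp _ ?_
      intro a b hab
      by_cases ha : (a : ℕ) = 0 <;> by_cases hb : (b : ℕ) = 0 <;> simp [ha, hb] at hab
      · exact Fin.ext (by omega)
      · have := congrArg Fin.val hab
        simp [Fin.val_last] at this
        have := b.isLt
        omega
      · exact hab
    have hee : ∀ i, e i ∈ Submodule.span ℝ (Set.range e') := by
      intro i
      rw [← hPu, heP]
      exact Submodule.subset_span (Set.mem_range_self i)
    have hff : ∀ j, f j ∈ Submodule.span ℝ (Set.range f'') := by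
      intro j
      rw [← hQu, hfQ]
      exact Submodule.subset_span (Set.mem_range_self j)
    set A := Wmatrix e' e with hAdef
    set B := Wmatrix f'' f with hBdef
    set W' := Wmatrix e' f'' with hW'def
    have hA : Aᵀ * A = 1 := SOrth.wmatrix_orthogonal he' he hee
    have hB : Bᵀ * B = 1 := SOrth.wmatrix_orthogonal hf'' hf hff
    have hAAt : A * Aᵀ = 1 := mul_eq_one_comm.mp hA
    have hBBt : B * Bᵀ = 1 := mul_eq_one_comm.mp hB
    have hWeq : Wmatrix e f = Aᵀ * (W' * B) := SOrth.wmatrix_base_change he' hf'' hee hff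
    set dvec : Fin n → ℝ := fun l => if (l : ℕ) = 0 then 0 else 1 with hdvec
    have hW'mat : W' = Matrix.of (fun k l : Fin n =>
        if (l : ℕ) = 0 then (0 : ℝ) else if k = l then 1 else 0) := by
      ext k l
      show ⟪e' k, f'' l⟫ = _
      by_cases hl : (l : ℕ) = 0
      · have : f'' l = u (Fin.last n) := by simp [hf''def, hl]
        rw [this]
        have hne : k.castSucc ≠ Fin.last n := (Fin.castSucc_lt_last k).ne
        have := orthonormal_iff_ite.mp hu k.castSucc (Fin.last n)
        simp [hne] at this
        simp [he'def, this, hl]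
      · have : f'' l = u l.castSucc := by simp [hf''def, hl]
        rw [this]
        have := orthonormal_iff_ite.mp hu k.castSucc l.castSucc
        simp only [Fin.castSucc_inj] at this
        simp [he'def, this, hl]
    have hD : W'ᵀ * W' = Matrix.diagonal dvec := by
      rw [hW'mat]
      ext l mm
      rw [Matrix.mul_apply, Matrix.diagonal_apply]
      by_cases hl : (l : ℕ) = 0
      · by_cases h : l = mm
        · have hmm0 : (mm : ℕ) = 0 := h ▸ hl
          simp [hl, hmm0, h, hdvec]
        · simp [hl, h]
      · by_cases hmm : (mm : ℕ) = 0
        · have hne : l ≠ mm := fun h => hl (h ▸ hmm)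
          simp [hmm, hne]
        · simp only [Matrix.transpose_apply, Matrix.of_apply, hl, hmm, if_false]
          rw [Finset.sum_eq_single l]
          · by_cases h : l = mm <;> simp [h, hdvec, hmm]
          · intro b _ hb
            simp [hb]
          · simp
    have hG : (Wmatrix e f)ᵀ * Wmatrix e f = Bᵀ * Matrix.diagonal dvec * B := by
      rw [hWeq, Matrix.transpose_mul, Matrix.transpose_mul, Matrix.transpose_transpose]
      rw [← hD]
      simp only [Matrix.mul_assoc]
      rw [← Matrix.mul_assoc A Aᵀ, hAAt, Matrix.one_mul]
    have hDD : Matrix.diagonal dvec * Matrix.diagonal dvec = Matrix.diagonal dvec := by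
      ext i j
      rw [Matrix.diagonal_mul_diagonal, Matrix.diagonal_apply, Matrix.diagonal_apply]
      by_cases h : i = j
      · by_cases hi : (i : ℕ) = 0
        · have hj : (j : ℕ) = 0 := h ▸ hi
          simp [h, hi, hj, hdvec]
        · have hj : ¬(j : ℕ) = 0 := fun hh => hi (by rw [h]; exact hh)
          simp [h, hi, hj, hdvec]
      · simp [h]
    have hdetB : IsUnit B.det := by
      have : B.det * Bᵀ.det = 1 := by rw [← Matrix.det_mul, hBBt, Matrix.det_one]
      exact IsUnit.of_mul_eq_one _ this
    have hdetBt : IsUnit Bᵀ.det := by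
      have : Bᵀ.det * B.det = 1 := by rw [← Matrix.det_mul, hB, Matrix.det_one]
      exact IsUnit.of_mul_eq_one _ this
    constructor
    · rw [hG]
      simp only [Matrix.mul_assoc]
      rw [← Matrix.mul_assoc B Bᵀ, hBBt, Matrix.one_mul,
        ← Matrix.mul_assoc (Matrix.diagonal dvec) (Matrix.diagonal dvec), hDD]
    · rw [hG]
      rw [Matrix.rank_mul_eq_left_of_isUnit_det B (Bᵀ * Matrix.diagonal dvec) hdetB,
        Matrix.rank_mul_eq_right_of_isUnit_det Bᵀ (Matrix.diagonal dvec) hdetBt,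
        Matrix.rank_diagonal]
      have hiff : ∀ l : Fin n, dvec l ≠ 0 ↔ ¬ ((l : ℕ) = 0) := by
        intro l
        by_cases hl : (l : ℕ) = 0 <;> simp [hdvec, hl]
      rw [Fintype.card_congr (Equiv.subtypeEquivRight hiff)]
      rw [Fintype.card_subtype_compl]
      have h0 : ∀ l : Fin n, (l : ℕ) = 0 ↔ l = (⟨0, hn⟩ : Fin n) := by
        intro l
        constructor
        · intro h; exact Fin.ext h
        · intro h; rw [h]
      rw [Fintype.card_congr (Equiv.subtypeEquivRight h0), Fintype.card_subtype_eq,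
        Fintype.card_fin]
  tfae_have 3 → 1 := by
    rintro ⟨hidem, hrank⟩
    set W := Wmatrix e f with hWdef
    have hdet : W.det = 0 := by
      by_contra h
      have hu : IsUnit (Wᵀ * W).det := by
        rw [Matrix.det_mul, Matrix.det_transpose]
        exact (isUnit_iff_ne_zero.mpr h).mul (isUnit_iff_ne_zero.mpr h)
      have hrk : (Wᵀ * W).rank = n := by
        have h2 := Matrix.rank_mul_eq_right_of_isUnit_det (Wᵀ * W) (1 : Matrix (Fin n) (Fin n) ℝ) hu
        rw [Matrix.mul_one, Matrix.rank_one, Fintype.card_fin] at h2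
        exact h2
      omega
    refine ⟨?_, hdet⟩
    obtain ⟨x, hx0, hWx⟩ := (Matrix.exists_mulVec_eq_zero_iff (M := W)).mpr hdet
    have hq0 : SOrth.lincomb f x ≠ 0 := by
      intro h
      exact hx0 (SOrth.lincomb_injective hf (by rw [h, map_zero]))
    have hqQ : SOrth.lincomb f x ∈ Q := by
      rw [hfQ]; exact SOrth.lincomb_mem f x
    have hqP : SOrth.lincomb f x ∈ Pᗮ := by
      rw [heP]; exact SOrth.lincomb_mem_orthogonal x hWx
    -- upper bound
    have hlt : finrank ℝ ↥(P ⊓ Q) < n := by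
      rcases lt_or_eq_of_le hinf_le with h | h
      · exact h
      · exfalso
        have hPQQ : P ⊓ Q = Q :=
          Submodule.eq_of_le_of_finrank_le inf_le_right (by omega)
        have hqP' : SOrth.lincomb f x ∈ P := by
          have hmem : SOrth.lincomb f x ∈ P ⊓ Q := by rw [hPQQ]; exact hqQ
          exact hmem.1
        have := (Submodule.mem_orthogonal _ _).mp hqP _ hqP'
        exact hq0 (inner_self_eq_zero.mp this)
    -- lower bound
    have hfix : ∀ s ∈ LinearMap.range (Wᵀ * W).mulVecLin, (Wᵀ * W).mulVec s = s := by
      rintro s ⟨z, rfl⟩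
      show (Wᵀ * W).mulVec ((Wᵀ * W).mulVecLin z) = _
      simp only [Matrix.mulVecLin_apply, Matrix.mulVec_mulVec, hidem]
    have hTle : Submodule.map (SOrth.lincomb f) (LinearMap.range (Wᵀ * W).mulVecLin) ≤ P ⊓ Q := by
      rintro y ⟨s, hs, rfl⟩
      constructor
      · rw [heP]
        exact SOrth.lincomb_mem_span_left he hf s (hfix s hs)
      · rw [hfQ]
        exact SOrth.lincomb_mem f s
    have hT : finrank ℝ ↥(Submodule.map (SOrth.lincomb f) (LinearMap.range (Wᵀ * W).mulVecLin))
        = n - 1 := by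
      rw [← LinearEquiv.finrank_eq
        (Submodule.equivMapOfInjective (SOrth.lincomb f) (SOrth.lincomb_injective hf) _)]
      exact hrank
    have hge := Submodule.finrank_mono hTle
    rw [hT] at hge
    omega
  tfae_finish
end
end

section
/- Let n, m ≥ 1 and let P, Q be n-dimensional linear subspaces of ℝ^{n+m} such that the W-matrix W = (⟨e_i, f_j⟩) of some (equivalently, any) orthonormal bases (e_i) of P and (f_j) of Q is invertible. Then there exist an integer r with 0 ≤ r ≤ min{n, m}, angles θ_1 ≥ θ_2 ≥ ⋯ ≥ θ_r with θ_i ∈ (0, π/2) for 1 ≤ i ≤ r, an orthonormal basis (e_1,…,e_n) of P, and orthonormal vectors e_{n+1},…,e_{n+m} spanning the orthogonal complement of P in ℝ^{n+m}, such that the vectors f_i := cos θ_i · e_i + sin θ_i · e_{n+i} for 1 ≤ i ≤ r together with f_i := e_i for r+1 ≤ i ≤ n form an orthonormal basis of Q. (The θ_i, together with n − r zero angles, are the Jordan angles between P and Q.) -/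
noncomputable section

open Module

section Aux

variable {E : Type*} [NormedAddCommGroup E] [InnerProductSpace ℝ E]

private lemma inner_projL (K : Submodule ℝ E) [K.HasOrthogonalProjection] (w v : E)
    (hv : v ∈ K) : (inner ℝ ((Submodule.orthogonalProjectionOnto K w : E)) v : ℝ) = inner ℝ w v := by
  have h := Submodule.starProjection_inner_eq_zero w v hv
  rw [inner_sub_left, sub_eq_zero] at h
  exact h.symm

private lemma span_coe_onb {k : ℕ} {K : Submodule ℝ E} (b : OrthonormalBasis (Fin k) ℝ K) :
    Submodule.span ℝ (Set.range fun i => (b i : E)) = K := by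
  have h : (Set.range fun i => (b i : E)) = K.subtype '' Set.range ⇑b.toBasis := by
    rw [b.coe_toBasis, ← Set.range_comp]; rfl
  rw [h, Submodule.span_image, b.toBasis.span_eq, Submodule.map_subtype_top]

end Aux

set_option maxHeartbeats 1000000 in
/-- **Jordan-angle normal form** for a pair of `n`-dimensional subspaces `P, Q ⊆ ℝ^{n+m}`
with invertible `W`-matrix: there are `0 ≤ r ≤ min{n,m}` angles
`π/2 > θ_1 ≥ ⋯ ≥ θ_r > 0`, an orthonormal basis `e_1, …, e_n` of `P` and orthonormal
vectors `e_{n+1}, …, e_{n+m}` spanning `Pᗮ` such that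
`f_i = cos θ_i e_i + sin θ_i e_{n+i}` (for `i ≤ r`) and `f_i = e_i` (for `i > r`)
form an orthonormal basis of `Q`. -/
theorem jordan_angle_normal_form {n m : ℕ} (hn : 1 ≤ n) (hm : 1 ≤ m)
    (P Q : Submodule ℝ (EuclideanSpace ℝ (Fin (n + m))))
    (hP : finrank ℝ P = n) (hQ : finrank ℝ Q = n)
    (e₀ f₀ : Fin n → EuclideanSpace ℝ (Fin (n + m)))
    (he₀ : Orthonormal ℝ e₀) (hf₀ : Orthonormal ℝ f₀)
    (heP : P = Submodule.span ℝ (Set.range e₀))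
    (hfQ : Q = Submodule.span ℝ (Set.range f₀))
    (hW : (Wmatrix e₀ f₀).det ≠ 0) :
    ∃ (r : ℕ) (hr : r ≤ min n m) (θ : Fin r → ℝ)
      (e : Fin (n + m) → EuclideanSpace ℝ (Fin (n + m))),
      Antitone θ ∧ (∀ i : Fin r, θ i ∈ Set.Ioo 0 (Real.pi / 2)) ∧
      Orthonormal ℝ e ∧
      P = Submodule.span ℝ (Set.range fun i : Fin n => e (Fin.castAdd m i)) ∧
      Pᗮ = Submodule.span ℝ (Set.range fun α : Fin m => e (Fin.natAdd n α)) ∧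
      Orthonormal ℝ (fun i : Fin n =>
        if h : (i : ℕ) < r then
          Real.cos (θ ⟨i, h⟩) • e (Fin.castAdd m i) +
            Real.sin (θ ⟨i, h⟩) • e ⟨n + (i : ℕ), by omega⟩
        else e (Fin.castAdd m i)) ∧
      Q = Submodule.span ℝ (Set.range fun i : Fin n =>
        if h : (i : ℕ) < r then
          Real.cos (θ ⟨i, h⟩) • e (Fin.castAdd m i) +
            Real.sin (θ ⟨i, h⟩) • e ⟨n + (i : ℕ), by omega⟩
        else e (Fin.castAdd m i)) := by
  classical
  -- the symmetric operator `proj_Q ∘ proj_P` on `Q`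
  let A : ↥Q →ₗ[ℝ] ↥Q :=
    (Submodule.orthogonalProjectionOnto Q).toLinearMap ∘ₗ P.subtype ∘ₗ
      (Submodule.orthogonalProjectionOnto P).toLinearMap ∘ₗ Q.subtype
  have hAapp : ∀ x : ↥Q,
      A x = Submodule.orthogonalProjectionOnto Q ((Submodule.orthogonalProjectionOnto P (x : EuclideanSpace ℝ (Fin (n + m))) : EuclideanSpace ℝ (Fin (n + m)))) := fun x => rfl
  have hAsymm : A.IsSymmetric := by
    intro x y
    have hBsym : ∀ a b : ↥Q,
        (inner ℝ ((Submodule.orthogonalProjectionOnto P (a : EuclideanSpace ℝ (Fin (n + m))) : EuclideanSpace ℝ (Fin (n + m)))) (b : EuclideanSpace ℝ (Fin (n + m))) : ℝ)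
          = inner ℝ ((Submodule.orthogonalProjectionOnto P (a : EuclideanSpace ℝ (Fin (n + m))) : EuclideanSpace ℝ (Fin (n + m)))) ((Submodule.orthogonalProjectionOnto P (b : EuclideanSpace ℝ (Fin (n + m))) : EuclideanSpace ℝ (Fin (n + m)))) := by
      intro a b
      rw [real_inner_comm]
      rw [← inner_projL P (b : EuclideanSpace ℝ (Fin (n + m))) _ (Submodule.orthogonalProjectionOnto P (a : EuclideanSpace ℝ (Fin (n + m)))).2]
      rw [real_inner_comm]
    calc (inner ℝ (A x) y : ℝ) = inner ℝ ((A x : EuclideanSpace ℝ (Fin (n + m)))) ((y : EuclideanSpace ℝ (Fin (n + m)))) := Submodule.coe_inner _ _ _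
      _ = inner ℝ ((Submodule.orthogonalProjectionOnto P (x : EuclideanSpace ℝ (Fin (n + m))) : EuclideanSpace ℝ (Fin (n + m)))) ((y : EuclideanSpace ℝ (Fin (n + m)))) := by
            rw [hAapp]
            exact inner_projL Q _ _ y.2
      _ = inner ℝ ((Submodule.orthogonalProjectionOnto P (x : EuclideanSpace ℝ (Fin (n + m))) : EuclideanSpace ℝ (Fin (n + m)))) ((Submodule.orthogonalProjectionOnto P (y : EuclideanSpace ℝ (Fin (n + m))) : EuclideanSpace ℝ (Fin (n + m)))) :=
            hBsym x y
      _ = inner ℝ ((Submodule.orthogonalProjectionOnto P (y : EuclideanSpace ℝ (Fin (n + m))) : EuclideanSpace ℝ (Fin (n + m)))) ((Submodule.orthogonalProjectionOnto P (x : EuclideanSpace ℝ (Fin (n + m))) : EuclideanSpace ℝ (Fin (n + m)))) :=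
            real_inner_comm _ _
      _ = inner ℝ ((Submodule.orthogonalProjectionOnto P (y : EuclideanSpace ℝ (Fin (n + m))) : EuclideanSpace ℝ (Fin (n + m)))) ((x : EuclideanSpace ℝ (Fin (n + m)))) := (hBsym y x).symm
      _ = inner ℝ ((A y : EuclideanSpace ℝ (Fin (n + m)))) ((x : EuclideanSpace ℝ (Fin (n + m)))) := by
            rw [hAapp]
            exact (inner_projL Q _ _ x.2).symm
      _ = inner ℝ ((x : EuclideanSpace ℝ (Fin (n + m)))) ((A y : EuclideanSpace ℝ (Fin (n + m)))) := real_inner_comm _ _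
      _ = inner ℝ x (A y) := (Submodule.coe_inner _ _ _).symm
  have hQfr : finrank ℝ ↥Q = n := hQ
  let fb : OrthonormalBasis (Fin n) ℝ ↥Q := hAsymm.eigenvectorBasis hQfr
  let lam : Fin n → ℝ := hAsymm.eigenvalues hQfr
  have hfb : ∀ i, A (fb i) = lam i • fb i := by
    intro i
    have h := hAsymm.apply_eigenvectorBasis hQfr i
    exact_mod_cast h
  let σ : Equiv.Perm (Fin n) := Tuple.sort lam
  let μ : Fin n → ℝ := lam ∘ σ
  have hμmono : Monotone μ := Tuple.monotone_sort lam
  let f : Fin n → EuclideanSpace ℝ (Fin (n + m)) := fun j => (fb (σ j) : EuclideanSpace ℝ (Fin (n + m)))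
  have hfQ' : ∀ j, f j ∈ Q := fun j => (fb (σ j)).2
  let u : Fin n → EuclideanSpace ℝ (Fin (n + m)) := fun j => ((Submodule.orthogonalProjectionOnto P (f j) : ↥P) : EuclideanSpace ℝ (Fin (n + m)))
  have huP : ∀ j, u j ∈ P := fun j => (Submodule.orthogonalProjectionOnto P (f j)).2
  have hproj : ∀ j, (Submodule.orthogonalProjectionOnto Q (u j) : ↥Q) = μ j • fb (σ j) := fun j => hfb (σ j)
  -- key inner ℝ product identities
  have key1 : ∀ i j, (inner ℝ (f i) (f j) : ℝ) = if i = j then 1 else 0 := by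
    intro i j
    have h := orthonormal_iff_ite.mp fb.orthonormal (σ i) (σ j)
    rw [Submodule.coe_inner] at h
    rw [show f i = (fb (σ i) : EuclideanSpace ℝ (Fin (n + m))) from rfl, show f j = (fb (σ j) : EuclideanSpace ℝ (Fin (n + m))) from rfl, h]
    simp [σ.injective.eq_iff]
  have key2 : ∀ i j, (inner ℝ (u i) (f j) : ℝ) = if i = j then μ i else 0 := by
    intro i j
    have h1 := (inner_projL Q (u i) (f j) (hfQ' j)).symm
    rw [hproj i] at h1
    rw [h1, Submodule.coe_smul, real_inner_smul_left]
    rw [show ((fb (σ i) : EuclideanSpace ℝ (Fin (n + m)))) = f i from rfl, key1 i j]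
    split <;> simp
  have key3 : ∀ i j, (inner ℝ (u i) (u j) : ℝ) = if i = j then μ i else 0 := by
    intro i j
    have horth : f j - u j ∈ Pᗮ := Submodule.sub_starProjection_mem_orthogonal (f j)
    have h0 : (inner ℝ (u i) (f j - u j) : ℝ) = 0 :=
      Submodule.inner_right_of_mem_orthogonal (huP i) horth
    rw [inner_sub_right, sub_eq_zero] at h0
    rw [← h0, key2]
  have key4 : ∀ i j, (inner ℝ (f i) (u j) : ℝ) = if i = j then μ j else 0 := by
    intro i j
    rw [real_inner_comm, key2 j i]
    simp [eq_comm]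
  have hμnonneg : ∀ i, 0 ≤ μ i := by
    intro i
    have h := key3 i i
    rw [if_pos rfl] at h
    rw [← h]
    exact real_inner_self_nonneg
  have hfu : ∀ i, ‖f i - u i‖ ^ 2 = 1 - μ i := by
    intro i
    rw [← real_inner_self_eq_norm_sq, inner_sub_left, inner_sub_right, inner_sub_right,
      key1, key4, key2, key3]
    simp
  have hμle1 : ∀ i, μ i ≤ 1 := by
    intro i
    have h := hfu i
    nlinarith [sq_nonneg ‖f i - u i‖]
  -- injectivity of the projection on `Q`, from invertibility of the `W`-matrix
  have hinj : ∀ x : EuclideanSpace ℝ (Fin (n + m)), x ∈ Q → ((Submodule.orthogonalProjectionOnto P x : EuclideanSpace ℝ (Fin (n + m)))) = 0 → x = 0 := by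
    intro x hx hpx
    have hxPo : x ∈ Pᗮ := by
      have h : x - (Submodule.orthogonalProjectionOnto P x : EuclideanSpace ℝ (Fin (n + m))) ∈ Pᗮ := Submodule.sub_starProjection_mem_orthogonal (K := P) x
      rwa [hpx, sub_zero] at h
    have hxperp : ∀ i, (inner ℝ (e₀ i) x : ℝ) = 0 := by
      intro i
      have he₀P : e₀ i ∈ P := heP ▸ Submodule.subset_span (Set.mem_range_self i)
      exact Submodule.inner_right_of_mem_orthogonal he₀P hxPo
    rw [hfQ] at hx
    obtain ⟨c, hc⟩ := (Submodule.mem_span_range_iff_exists_fun ℝ).mp hx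
    have hc0 : (Wmatrix e₀ f₀).mulVec c = 0 := by
      funext i
      have h := hxperp i
      rw [← hc, inner_sum] at h
      simp_rw [real_inner_smul_right] at h
      simpa [Matrix.mulVec, dotProduct, Wmatrix, mul_comm] using h
    have hcz : c = 0 := by
      have hu : IsUnit (Wmatrix e₀ f₀) :=
        (Matrix.isUnit_iff_isUnit_det _).mpr (isUnit_iff_ne_zero.mpr hW)
      have hinj' := Matrix.mulVec_injective_iff_isUnit.mpr hu
      apply hinj'
      rw [hc0, Matrix.mulVec_zero]
    rw [← hc, hcz]
    simp
  have hμpos : ∀ i, 0 < μ i := by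
    intro i
    rcases (hμnonneg i).lt_or_eq with h | h
    · exact h
    · exfalso
      have hu0 : u i = 0 := by
        have h3 := key3 i i
        rw [if_pos rfl, ← h] at h3
        exact inner_self_eq_zero.mp h3
      have hf0 : f i = 0 := hinj (f i) (hfQ' i) hu0
      have h1 := key1 i i
      rw [if_pos rfl, hf0] at h1
      simp at h1
  -- the number of angles
  let r : ℕ := (Finset.univ.filter fun i : Fin n => μ i < 1).card
  have hrn : r ≤ n := by
    have := Finset.card_filter_le (Finset.univ : Finset (Fin n)) (fun i => μ i < 1)
    simpa using this
  have hr_iff : ∀ i : Fin n, (i : ℕ) < r ↔ μ i < 1 := by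
    intro i
    constructor
    · intro h
      by_contra hlt
      push_neg at hlt
      have hsub : (Finset.univ.filter fun j : Fin n => μ j < 1) ⊆ Finset.Iio i := by
        intro j hj
        rw [Finset.mem_filter] at hj
        rw [Finset.mem_Iio]
        by_contra hji
        push_neg at hji
        exact absurd (lt_of_lt_of_le hj.2 (le_trans hlt (hμmono hji))) (lt_irrefl _)
      have hcard := Finset.card_le_card hsub
      rw [Fin.card_Iio] at hcard
      omega
    · intro h
      have hsub : Finset.Iic i ⊆ Finset.univ.filter fun j : Fin n => μ j < 1 := by
        intro j hj
        rw [Finset.mem_Iic] at hj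
        exact Finset.mem_filter.mpr ⟨Finset.mem_univ _, lt_of_le_of_lt (hμmono hj) h⟩
      have hcard := Finset.card_le_card hsub
      rw [Fin.card_Iic] at hcard
      omega
  have hμ1 : ∀ i : Fin n, ¬ (i : ℕ) < r → μ i = 1 := by
    intro i hi
    have := hr_iff i
    have h1 : ¬ μ i < 1 := fun h => hi ((hr_iff i).mpr h)
    push_neg at h1
    exact le_antisymm (hμle1 i) h1
  -- orthonormal basis of `P`
  let eP : Fin n → EuclideanSpace ℝ (Fin (n + m)) := fun i => (Real.sqrt (μ i))⁻¹ • u i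
  have hePmem : ∀ i, eP i ∈ P := fun i => Submodule.smul_mem _ _ (huP i)
  have hsqrtpos : ∀ i, 0 < Real.sqrt (μ i) := fun i => Real.sqrt_pos.mpr (hμpos i)
  have keyP : ∀ i j, (inner ℝ (eP i) (eP j) : ℝ) = if i = j then 1 else 0 := by
    intro i j
    rw [show eP i = (Real.sqrt (μ i))⁻¹ • u i from rfl,
      show eP j = (Real.sqrt (μ j))⁻¹ • u j from rfl,
      real_inner_smul_left, real_inner_smul_right, key3]
    split
    · next h =>
      subst h
      have hms := Real.mul_self_sqrt (hμnonneg i)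
      have hne := (hsqrtpos i).ne'
      rw [← hms]
      field_simp
      rw [Real.sqrt_sq (hsqrtpos i).le]
    · simp
  have honP : Orthonormal ℝ eP := orthonormal_iff_ite.mpr keyP
  -- the orthogonal complements directions
  let g : Fin n → EuclideanSpace ℝ (Fin (n + m)) := fun i => (Real.sqrt (1 - μ i))⁻¹ • (f i - u i)
  have hgmem : ∀ i, g i ∈ Pᗮ :=
    fun i => Submodule.smul_mem _ _ (Submodule.sub_starProjection_mem_orthogonal (f i))
  have hdiff : ∀ i j, (inner ℝ (f i - u i) (f j - u j) : ℝ) = if i = j then 1 - μ i else 0 := by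
    intro i j
    rw [inner_sub_left, inner_sub_right, inner_sub_right, key1, key4, key2, key3]
    split
    · next h => subst h; ring
    · ring
  have keyg : ∀ i j : Fin n, (i : ℕ) < r → (j : ℕ) < r →
      (inner ℝ (g i) (g j) : ℝ) = if i = j then 1 else 0 := by
    intro i j hi hj
    have hiμ := (hr_iff i).mp hi
    rw [show g i = (Real.sqrt (1 - μ i))⁻¹ • (f i - u i) from rfl,
      show g j = (Real.sqrt (1 - μ j))⁻¹ • (f j - u j) from rfl,
      real_inner_smul_left, real_inner_smul_right, hdiff]
    split
    · next h =>
      subst h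
      have h1 : (0:ℝ) < 1 - μ i := by linarith
      have hms := Real.mul_self_sqrt h1.le
      have hne := (Real.sqrt_pos.mpr h1).ne'
      rw [← hms]
      field_simp
      rw [Real.sqrt_sq (Real.sqrt_pos.mpr h1).le]
    · simp
  -- relations between `f`, `eP` and `g`
  have hfeP : ∀ i : Fin n, ¬ (i : ℕ) < r → f i = eP i := by
    intro i hi
    have h1 : μ i = 1 := hμ1 i hi
    have h2 : f i - u i = 0 := by
      have h := hfu i
      rw [h1, sub_self, pow_eq_zero_iff (by norm_num)] at h
      exact norm_eq_zero.mp h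
    have h3 : f i = u i := by rwa [sub_eq_zero] at h2
    rw [show eP i = (Real.sqrt (μ i))⁻¹ • u i from rfl, h1, Real.sqrt_one, inv_one, one_smul, h3]
  have hfrel : ∀ i : Fin n, (i : ℕ) < r →
      f i = Real.sqrt (μ i) • eP i + Real.sqrt (1 - μ i) • g i := by
    intro i hi
    have hiμ := (hr_iff i).mp hi
    have h1 : (0:ℝ) < 1 - μ i := by linarith
    rw [show eP i = (Real.sqrt (μ i))⁻¹ • u i from rfl,
      show g i = (Real.sqrt (1 - μ i))⁻¹ • (f i - u i) from rfl,
      smul_smul, smul_smul, mul_inv_cancel₀ (hsqrtpos i).ne',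
      mul_inv_cancel₀ (Real.sqrt_pos.mpr h1).ne', one_smul, one_smul]
    abel
  -- `r ≤ m`
  have hPofr : finrank ℝ ↥Pᗮ = m := by
    have h := Submodule.finrank_add_finrank_orthogonal (K := P)
    rw [hP, finrank_euclideanSpace_fin] at h
    omega
  let gsub : Fin r → ↥Pᗮ := fun i => ⟨g ⟨i, lt_of_lt_of_le i.2 hrn⟩, hgmem _⟩
  have hgsub : Orthonormal ℝ gsub := by
    rw [orthonormal_iff_ite]
    intro a b
    rw [Submodule.coe_inner]
    rw [show (gsub a : EuclideanSpace ℝ (Fin (n + m))) = g ⟨a, lt_of_lt_of_le a.2 hrn⟩ from rfl,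
      show (gsub b : EuclideanSpace ℝ (Fin (n + m))) = g ⟨b, lt_of_lt_of_le b.2 hrn⟩ from rfl,
      keyg _ _ a.2 b.2]
    simp [Fin.ext_iff]
  have hrm : r ≤ m := by
    have h := hgsub.linearIndependent.fintype_card_le_finrank
    rwa [Fintype.card_fin, hPofr] at h
  -- extend `gsub` to an orthonormal basis of `Pᗮ`
  let v : Fin m → ↥Pᗮ := fun α =>
    if h : (α : ℕ) < r then gsub ⟨α, h⟩ else 0
  have hvon : Orthonormal ℝ (Set.restrict {α : Fin m | (α : ℕ) < r} v) := by
    rw [orthonormal_iff_ite]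
    rintro ⟨a, ha⟩ ⟨b, hb⟩
    show inner ℝ (v a) (v b) = _
    rw [show v a = gsub ⟨a, ha⟩ from dif_pos ha, show v b = gsub ⟨b, hb⟩ from dif_pos hb]
    have h := orthonormal_iff_ite.mp hgsub ⟨a, ha⟩ ⟨b, hb⟩
    rw [h]
    simp [Fin.ext_iff, Subtype.ext_iff]
  obtain ⟨b, hb⟩ := hvon.exists_orthonormalBasis_extension_of_card_eq
    (by rw [hPofr, Fintype.card_fin])
  -- the full orthonormal family
  let e : Fin (n + m) → EuclideanSpace ℝ (Fin (n + m)) := fun k =>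
    if h : (k : ℕ) < n then eP ⟨k, h⟩ else ((b ⟨(k : ℕ) - n, by omega⟩ : ↥Pᗮ) : EuclideanSpace ℝ (Fin (n + m)))
  have he_lt : ∀ (k : Fin (n + m)) (hk : (k : ℕ) < n), e k = eP ⟨k, hk⟩ :=
    fun k hk => dif_pos hk
  have he_ge : ∀ (k : Fin (n + m)) (hk : ¬ (k : ℕ) < n),
      e k = ((b ⟨(k : ℕ) - n, by omega⟩ : ↥Pᗮ) : EuclideanSpace ℝ (Fin (n + m))) :=
    fun k hk => dif_neg hk
  have he_cast : ∀ i : Fin n, e (Fin.castAdd m i) = eP i := fun i => he_lt _ i.2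
  have he_nat : ∀ α : Fin m, e (Fin.natAdd n α) = ((b α : ↥Pᗮ) : EuclideanSpace ℝ (Fin (n + m))) := by
    intro α
    have hα : ¬ ((Fin.natAdd n α : Fin (n + m)) : ℕ) < n := by simp
    rw [he_ge _ hα]
    have h2 : (⟨((Fin.natAdd n α : Fin (n + m)) : ℕ) - n, by omega⟩ : Fin m) = α := by
      ext; simp
    rw [h2]
  have hbcoe : ∀ α β : Fin m,
      (inner ℝ ((b α : ↥Pᗮ) : EuclideanSpace ℝ (Fin (n + m)))
        ((b β : ↥Pᗮ) : EuclideanSpace ℝ (Fin (n + m))) : ℝ) = if α = β then 1 else 0 := by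
    intro α β
    have h := orthonormal_iff_ite.mp b.orthonormal α β
    rwa [Submodule.coe_inner] at h
  have hone : Orthonormal ℝ e := by
    rw [orthonormal_iff_ite]
    intro k l
    by_cases hk : (k : ℕ) < n <;> by_cases hl : (l : ℕ) < n
    · rw [he_lt k hk, he_lt l hl, keyP]
      simp [Fin.ext_iff]
    · rw [he_lt k hk, he_ge l hl]
      rw [Submodule.inner_right_of_mem_orthogonal (hePmem _) (b _).2]
      rw [if_neg (by intro h; subst h; exact hl hk)]
    · rw [he_lt l hl, he_ge k hk]
      rw [Submodule.inner_left_of_mem_orthogonal (hePmem _) (b _).2]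
      rw [if_neg (by intro h; subst h; exact hk hl)]
    · rw [he_ge k hk, he_ge l hl, hbcoe]
      have hk' := k.isLt
      have hl' := l.isLt
      have hiff : ((⟨(k : ℕ) - n, by omega⟩ : Fin m) = ⟨(l : ℕ) - n, by omega⟩) ↔ k = l := by
        simp only [Fin.mk.injEq, Fin.ext_iff]
        omega
      simp only [hiff]
  -- the angles
  let θ : Fin r → ℝ := fun j => Real.arccos (Real.sqrt (μ ⟨j, lt_of_lt_of_le j.2 hrn⟩))
  have hsqle1 : ∀ i : Fin n, Real.sqrt (μ i) ≤ 1 := by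
    intro i
    have := Real.sqrt_le_sqrt (hμle1 i)
    rwa [Real.sqrt_one] at this
  have hθcos : ∀ j : Fin r, Real.cos (θ j) = Real.sqrt (μ ⟨j, lt_of_lt_of_le j.2 hrn⟩) := by
    intro j
    exact Real.cos_arccos (le_trans (by norm_num) (Real.sqrt_nonneg _)) (hsqle1 _)
  have hθsin : ∀ j : Fin r, Real.sin (θ j) = Real.sqrt (1 - μ ⟨j, lt_of_lt_of_le j.2 hrn⟩) := by
    intro j
    rw [show θ j = Real.arccos (Real.sqrt (μ ⟨j, lt_of_lt_of_le j.2 hrn⟩)) from rfl,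
      Real.sin_arccos, Real.sq_sqrt (hμnonneg _)]
  have hθanti : Antitone θ := by
    intro a b hab
    have h1 : (⟨a, lt_of_lt_of_le a.2 hrn⟩ : Fin n) ≤ ⟨b, lt_of_lt_of_le b.2 hrn⟩ := hab
    have h2 : Real.sqrt (μ ⟨a, lt_of_lt_of_le a.2 hrn⟩) ≤ Real.sqrt (μ ⟨b, lt_of_lt_of_le b.2 hrn⟩) :=
      Real.sqrt_le_sqrt (hμmono h1)
    rw [show θ a = Real.arccos _ from rfl, show θ b = Real.arccos _ from rfl,
      Real.arccos_eq_pi_div_two_sub_arcsin, Real.arccos_eq_pi_div_two_sub_arcsin]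
    exact sub_le_sub_left (Real.monotone_arcsin h2) _
  have hθIoo : ∀ j : Fin r, θ j ∈ Set.Ioo 0 (Real.pi / 2) := by
    intro j
    have hjμ := (hr_iff ⟨j, lt_of_lt_of_le j.2 hrn⟩).mp j.2
    constructor
    · apply Real.arccos_pos.mpr
      have := Real.sqrt_lt_sqrt (hμnonneg _) hjμ
      rwa [Real.sqrt_one] at this
    · exact Real.arccos_lt_pi_div_two.mpr (Real.sqrt_pos.mpr (hμpos _))
  -- the `f'` family from the statement equals `f`
  have hF : ∀ i : Fin n,
      (if h : (i : ℕ) < r then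
        Real.cos (θ ⟨i, h⟩) • e (Fin.castAdd m i) +
          Real.sin (θ ⟨i, h⟩) • e ⟨n + (i : ℕ), by omega⟩
      else e (Fin.castAdd m i)) = f i := by
    intro i
    by_cases h : (i : ℕ) < r
    · rw [dif_pos h]
      have him : (i : ℕ) < m := lt_of_lt_of_le h hrm
      have h1 : (⟨n + (i : ℕ), by omega⟩ : Fin (n + m)) = Fin.natAdd n ⟨i, him⟩ := by
        ext; simp
      have h2 : e ⟨n + (i : ℕ), by omega⟩ = g i := by
        rw [h1, he_nat]
        have h3 := hb ⟨i, him⟩ h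
        rw [h3, show v ⟨i, him⟩ = gsub ⟨i, h⟩ from dif_pos h]
      rw [he_cast, h2]
      have hc : Real.cos (θ ⟨i, h⟩) = Real.sqrt (μ i) := by
        rw [hθcos]
      have hs : Real.sin (θ ⟨i, h⟩) = Real.sqrt (1 - μ i) := by
        rw [hθsin]
      rw [hc, hs, ← hfrel i h]
    · rw [dif_neg h, he_cast, ← hfeP i h]
  -- conclusions
  refine ⟨r, le_min hrn hrm, θ, e, hθanti, hθIoo, hone, ?_, ?_, ?_, ?_⟩
  · -- P = span eP
    have hrange : (fun i : Fin n => e (Fin.castAdd m i)) = eP := funext he_cast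
    rw [hrange]
    symm
    apply Submodule.eq_of_le_of_finrank_le
    · rw [Submodule.span_le]
      rintro x ⟨i, rfl⟩
      exact hePmem i
    · rw [hP, finrank_span_eq_card honP.linearIndependent, Fintype.card_fin]
  · -- Pᗮ = span b
    have hrange : (fun α : Fin m => e (Fin.natAdd n α))
        = fun α : Fin m => ((b α : ↥Pᗮ) : EuclideanSpace ℝ (Fin (n + m))) := funext he_nat
    rw [hrange, span_coe_onb]
  · -- orthonormality of the f' family
    have : (fun i : Fin n =>
        if h : (i : ℕ) < r then
          Real.cos (θ ⟨i, h⟩) • e (Fin.castAdd m i) +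
            Real.sin (θ ⟨i, h⟩) • e ⟨n + (i : ℕ), by omega⟩
        else e (Fin.castAdd m i)) = f := funext hF
    rw [this]
    exact orthonormal_iff_ite.mpr key1
  · -- Q = span f'
    have hfn : (fun i : Fin n =>
        if h : (i : ℕ) < r then
          Real.cos (θ ⟨i, h⟩) • e (Fin.castAdd m i) +
            Real.sin (θ ⟨i, h⟩) • e ⟨n + (i : ℕ), by omega⟩
        else e (Fin.castAdd m i)) = f := funext hF
    rw [hfn]
    have hrange : Set.range f = Set.range fun j : Fin n => ((fb j : ↥Q) : EuclideanSpace ℝ (Fin (n + m))) := by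
      have : f = (fun j : Fin n => ((fb j : ↥Q) : EuclideanSpace ℝ (Fin (n + m)))) ∘ σ := rfl
      rw [this, Set.range_comp, σ.surjective.range_eq, Set.image_univ]
    rw [hrange, span_coe_onb]
end
end

section
/- Let n, m ≥ 1 and let (u_1, …, u_{n+m}) be an orthonormal basis of ℝ^{n+m}. Let P₀ = span(u_1, u_2, …, u_n) and Q = span(u_{n+1}, u_2, …, u_n). For an n-dimensional subspace S of ℝ^{n+m} with orthonormal basis (s_1,…,s_n), set x₁(S) := det(⟨s_i, u_j⟩)_{1≤i,j≤n} (the Gram determinant against (u_1,u_2,…,u_n)) and x₂(S) := det of the n×n matrix whose (i,1) entry is ⟨s_i, u_{n+1}⟩ and whose (i,j) entry for 2 ≤ j ≤ n is ⟨s_i, u_j⟩ (the Gram determinant against (u_{n+1},u_2,…,u_n)). Then x₁(S)² + x₂(S)² ≤ 1, with equality if and only if S = span(cos t · u_1 + sin t · u_{n+1}, u_2, …, u_n) for some t ∈ ℝ. -/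
noncomputable section

open Finset Matrix InnerProductSpace

instance (priority := 10000) finWFLT (k : ℕ) : WellFoundedLT (Fin k) := inferInstance

namespace SMapAux

variable {E : Type*} [NormedAddCommGroup E] [InnerProductSpace ℝ E]

local notation "⟪" x ", " y "⟫" => @inner ℝ _ _ x y

/-- Coefficient matrix expressing `y` in terms of its Gram–Schmidt orthogonalization. -/
def Lmat {k : ℕ} (y : Fin k → E) : Matrix (Fin k) (Fin k) ℝ :=
  Matrix.of fun i j =>
    if j = i then 1
    else if j < i then ⟪gramSchmidt ℝ y j, y i⟫ / (‖gramSchmidt ℝ y j‖ : ℝ) ^ 2 else 0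

lemma y_eq_sum {k : ℕ} (y : Fin k → E) (i : Fin k) :
    y i = ∑ j, Lmat y i j • gramSchmidt ℝ y j := by
  have h1 : ∑ j, Lmat y i j • gramSchmidt ℝ y j
      = ∑ j ∈ Finset.Iic i, Lmat y i j • gramSchmidt ℝ y j := by
    refine (Finset.sum_subset (Finset.subset_univ _) ?_).symm
    intro j _ hj
    have h2 : ¬ j ≤ i := by simpa using hj
    have : Lmat y i j = 0 := by
      simp only [Lmat, Matrix.of_apply]
      rw [if_neg, if_neg]
      · exact fun h => h2 (le_of_lt h)
      · rintro rfl; exact h2 le_rfl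
    simp [this]
  rw [h1, ← Finset.Iio_insert, Finset.sum_insert (by simp)]
  have hLi : Lmat y i i = 1 := by simp [Lmat]
  rw [hLi, one_smul]
  have h3 : ∑ j ∈ Finset.Iio i, Lmat y i j • gramSchmidt ℝ y j
      = ∑ j ∈ Finset.Iio i,
        (⟪gramSchmidt ℝ y j, y i⟫ / (‖gramSchmidt ℝ y j‖ : ℝ) ^ 2) • gramSchmidt ℝ y j := by
    refine Finset.sum_congr rfl fun j hj => ?_
    have hji : j < i := Finset.mem_Iio.mp hj
    simp [Lmat, hji, hji.ne]
  rw [h3]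
  exact gramSchmidt_def'' ℝ y i

lemma gram_eq {k : ℕ} (y : Fin k → E) :
    (Matrix.of fun i j => ⟪y i, y j⟫) =
      Lmat y * Matrix.diagonal (fun j => ‖gramSchmidt ℝ y j‖ ^ 2) * (Lmat y)ᵀ := by
  apply Matrix.ext
  intro i k'
  have lhs : ⟪y i, y k'⟫ = ∑ j, Lmat y i j * (Lmat y k' j * ‖gramSchmidt ℝ y j‖ ^ 2) := by
    rw [y_eq_sum y i, y_eq_sum y k']
    rw [sum_inner]
    refine Finset.sum_congr rfl fun j _ => ?_
    rw [inner_sum]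
    rw [Finset.sum_eq_single j (fun l _ hl => by
        rw [real_inner_smul_left, real_inner_smul_right,
          gramSchmidt_orthogonal ℝ y (Ne.symm hl)]; ring)
      (fun h => absurd (Finset.mem_univ j) h)]
    rw [real_inner_smul_left, real_inner_smul_right, real_inner_self_eq_norm_sq]
  have rhs : (Lmat y * Matrix.diagonal (fun j => ‖gramSchmidt ℝ y j‖ ^ 2) * (Lmat y)ᵀ) i k'
      = ∑ j, Lmat y i j * ‖gramSchmidt ℝ y j‖ ^ 2 * Lmat y k' j := by
    rw [Matrix.mul_apply]
    refine Finset.sum_congr rfl fun j _ => ?_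
    rw [Matrix.mul_diagonal, Matrix.transpose_apply]
  rw [Matrix.of_apply, lhs, rhs]
  exact Finset.sum_congr rfl fun j _ => by ring

lemma det_Lmat {k : ℕ} (y : Fin k → E) : (Lmat y).det = 1 := by
  rw [← Matrix.det_transpose]
  rw [Matrix.det_of_upperTriangular]
  · simp [Lmat]
  · intro i j hij
    have hij' : j < i := hij
    simp only [Matrix.transpose_apply, Lmat, Matrix.of_apply]
    rw [if_neg (by exact fun h => absurd h (ne_of_gt hij')), if_neg (by exact fun h => absurd h (lt_asymm hij'))]

lemma gram_det {k : ℕ} (y : Fin k → E) :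
    (Matrix.of fun i j => ⟪y i, y j⟫).det = ∏ j, ‖gramSchmidt ℝ y j‖ ^ 2 := by
  rw [gram_eq, Matrix.det_mul, Matrix.det_mul, Matrix.det_transpose, det_Lmat,
    Matrix.det_diagonal, one_mul, mul_one]

lemma norm_gs_sq_le {k : ℕ} (y : Fin k → E) (i : Fin k) :
    ‖gramSchmidt ℝ y i‖ ^ 2 ≤ ‖y i‖ ^ 2 := by
  set g := gramSchmidt ℝ y i with hg
  have horth : ⟪g, y i - g⟫ = 0 := by
    have hrest : y i - g = ∑ j ∈ Finset.Iio i,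
        (⟪gramSchmidt ℝ y j, y i⟫ / (‖gramSchmidt ℝ y j‖ : ℝ) ^ 2) • gramSchmidt ℝ y j := by
      conv_lhs => rw [gramSchmidt_def'' ℝ y i]
      rw [hg]; abel
    rw [hrest, inner_sum]
    refine Finset.sum_eq_zero fun j hj => ?_
    have hji : j < i := Finset.mem_Iio.mp hj
    rw [real_inner_smul_right, gramSchmidt_orthogonal ℝ y hji.ne', mul_zero]
  have : ‖y i‖ ^ 2 = ‖g‖ ^ 2 + ‖y i - g‖ ^ 2 := by
    have := norm_add_sq_real g (y i - g)
    simp only [add_sub_cancel] at this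
    rw [this, horth]
    ring
  nlinarith [sq_nonneg ‖y i - g‖]


section Pair

variable {k : ℕ} (s v : Fin k → E)

/-- The matrix of inner products between the two families. -/
def Gmat : Matrix (Fin k) (Fin k) ℝ := Matrix.of fun i j => ⟪s i, v j⟫

/-- Projections of `s i` onto the span of `v`. -/
def yvec (i : Fin k) : E := ∑ j, Gmat s v i j • v j

lemma inner_y_y (hv : Orthonormal ℝ v) (i i' : Fin k) :
    ⟪yvec s v i, yvec s v i'⟫ = ∑ j, Gmat s v i j * Gmat s v i' j := by
  unfold yvec
  rw [sum_inner]
  refine Finset.sum_congr rfl fun j _ => ?_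
  rw [inner_sum]
  rw [Finset.sum_eq_single j (fun l _ hl => by
      rw [real_inner_smul_left, real_inner_smul_right, orthonormal_iff_ite.mp hv j l,
        if_neg (Ne.symm hl)]; ring)
    (fun h => absurd (Finset.mem_univ j) h)]
  rw [real_inner_smul_left, real_inner_smul_right, orthonormal_iff_ite.mp hv j j,
    if_pos rfl]
  ring

lemma inner_s_y (hv : Orthonormal ℝ v) (i i' : Fin k) :
    ⟪s i, yvec s v i'⟫ = ∑ j, Gmat s v i j * Gmat s v i' j := by
  unfold yvec
  rw [inner_sum]
  refine Finset.sum_congr rfl fun j _ => ?_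
  rw [real_inner_smul_right]
  simp only [Gmat, Matrix.of_apply]
  ring

lemma mulT (hv : Orthonormal ℝ v) :
    Gmat s v * (Gmat s v)ᵀ = Matrix.of fun i i' => ⟪yvec s v i, yvec s v i'⟫ := by
  apply Matrix.ext
  intro i i'
  rw [Matrix.mul_apply, Matrix.of_apply, inner_y_y s v hv]
  exact Finset.sum_congr rfl fun j _ => by rw [Matrix.transpose_apply]

lemma inner_s_y_self (hv : Orthonormal ℝ v) (i : Fin k) :
    ⟪s i, yvec s v i⟫ = ‖yvec s v i‖ ^ 2 := by
  rw [inner_s_y s v hv i i, ← inner_y_y s v hv i i, real_inner_self_eq_norm_sq]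

lemma norm_y_sq_le_one (hs : Orthonormal ℝ s) (hv : Orthonormal ℝ v) (i : Fin k) :
    ‖yvec s v i‖ ^ 2 ≤ 1 := by
  have h1 := inner_s_y_self s v hv i
  have h2 := real_inner_le_norm (s i) (yvec s v i)
  have h3 : ‖s i‖ = 1 := hs.1 i
  rw [h3, one_mul] at h2
  nlinarith [norm_nonneg (yvec s v i)]

lemma det_sq_eq (hv : Orthonormal ℝ v) :
    (Gmat s v).det ^ 2 = ∏ j, ‖gramSchmidt ℝ (yvec s v) j‖ ^ 2 := by
  have h : (Gmat s v).det ^ 2 = (Gmat s v * (Gmat s v)ᵀ).det := by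
    rw [Matrix.det_mul, Matrix.det_transpose]; ring
  rw [h, mulT s v hv, gram_det]

lemma det_sq_le_one (hs : Orthonormal ℝ s) (hv : Orthonormal ℝ v) :
    (Gmat s v).det ^ 2 ≤ 1 := by
  rw [det_sq_eq s v hv]
  calc ∏ j, ‖gramSchmidt ℝ (yvec s v) j‖ ^ 2
      ≤ ∏ j, ‖yvec s v j‖ ^ 2 :=
        Finset.prod_le_prod (fun j _ => sq_nonneg _) (fun j _ => norm_gs_sq_le _ j)
    _ ≤ 1 := Finset.prod_le_one (fun j _ => sq_nonneg _)
        (fun j _ => norm_y_sq_le_one s v hs hv j)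

lemma span_le_of_det_sq_eq_one (hs : Orthonormal ℝ s) (hv : Orthonormal ℝ v)
    (h : (Gmat s v).det ^ 2 = 1) :
    Submodule.span ℝ (Set.range s) ≤ Submodule.span ℝ (Set.range v) := by
  have hgs : ∀ j, ‖gramSchmidt ℝ (yvec s v) j‖ ^ 2 ≤ 1 := fun j =>
    le_trans (norm_gs_sq_le _ j) (norm_y_sq_le_one s v hs hv j)
  have hprod : ∏ j, ‖gramSchmidt ℝ (yvec s v) j‖ ^ 2 = 1 := by
    rw [← det_sq_eq s v hv, h]
  have hyi : ∀ i, ‖yvec s v i‖ ^ 2 = 1 := by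
    intro i
    have h1 : (1 : ℝ) ≤ ‖gramSchmidt ℝ (yvec s v) i‖ ^ 2 := by
      have hmul := Finset.mul_prod_erase Finset.univ
        (fun j => ‖gramSchmidt ℝ (yvec s v) j‖ ^ 2) (Finset.mem_univ i)
      have h2 : ∏ j ∈ Finset.univ.erase i, ‖gramSchmidt ℝ (yvec s v) j‖ ^ 2 ≤ 1 :=
        Finset.prod_le_one (fun j _ => sq_nonneg _) (fun j _ => hgs j)
      have h3 : (0 : ℝ) ≤ ∏ j ∈ Finset.univ.erase i, ‖gramSchmidt ℝ (yvec s v) j‖ ^ 2 :=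
        Finset.prod_nonneg (fun j _ => sq_nonneg _)
      rw [hprod] at hmul
      have h4 : ‖gramSchmidt ℝ (yvec s v) i‖ ^ 2 *
          (∏ j ∈ Finset.univ.erase i, ‖gramSchmidt ℝ (yvec s v) j‖ ^ 2) ≤
          ‖gramSchmidt ℝ (yvec s v) i‖ ^ 2 :=
        mul_le_of_le_one_right (sq_nonneg _) h2
      linarith
    have h2 := norm_gs_sq_le (yvec s v) i
    have h3 := norm_y_sq_le_one s v hs hv i
    linarith
  have hsy : ∀ i, s i = yvec s v i := by
    intro i
    have h1 := inner_s_y_self s v hv i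
    have h4 : ‖s i - yvec s v i‖ ^ 2 = 0 := by
      rw [norm_sub_sq_real, h1, hyi i, hs.1 i]
      norm_num
    have h5 : s i - yvec s v i = 0 := by
      rw [← norm_eq_zero]
      nlinarith [norm_nonneg (s i - yvec s v i)]
    exact sub_eq_zero.mp h5
  rw [Submodule.span_le]
  rintro _ ⟨i, rfl⟩
  rw [hsy i]
  exact Submodule.sum_mem _ fun j _ =>
    Submodule.smul_mem _ _ (Submodule.subset_span ⟨j, rfl⟩)

lemma det_sq_eq_one_of_le (hs : Orthonormal ℝ s) (hv : Orthonormal ℝ v)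
    (h : ∀ i, s i ∈ Submodule.span ℝ (Set.range v)) :
    (Gmat s v).det ^ 2 = 1 := by
  have hy : ∀ i, yvec s v i = s i := by
    intro i
    obtain ⟨c, hc⟩ := (Submodule.mem_span_range_iff_exists_fun ℝ).mp (h i)
    have hG : ∀ j, Gmat s v i j = c j := by
      intro j
      simp only [Gmat, Matrix.of_apply]
      rw [← hc, sum_inner]
      rw [Finset.sum_eq_single j (fun l _ hl => by
          rw [real_inner_smul_left, orthonormal_iff_ite.mp hv l j, if_neg hl]; ring)
        (fun hj => absurd (Finset.mem_univ j) hj)]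
      rw [real_inner_smul_left, orthonormal_iff_ite.mp hv j j, if_pos rfl, mul_one]
    unfold yvec
    rw [← hc]
    exact Finset.sum_congr rfl fun j _ => by rw [hG j]
  have hone : Gmat s v * (Gmat s v)ᵀ = 1 := by
    rw [mulT s v hv]
    apply Matrix.ext
    intro i i'
    rw [Matrix.of_apply, hy i, hy i', orthonormal_iff_ite.mp hs i i', Matrix.one_apply]
  have hdet := congrArg Matrix.det hone
  rw [Matrix.det_mul, Matrix.det_transpose, Matrix.det_one] at hdet
  nlinarith [hdet]

end Pair

section Setup

variable {n m : ℕ}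

/-- The rotated family `(cos t · u₁ + sin t · u_{n+1}, u₂, …, u_n)`. -/
def vfam (hn : 1 ≤ n) (hm : 1 ≤ m) (u : Fin (n + m) → EuclideanSpace ℝ (Fin (n + m)))
    (t : ℝ) : Fin n → EuclideanSpace ℝ (Fin (n + m)) := fun j =>
  if (j : ℕ) = 0 then
    Real.cos t • u (Fin.castAdd m ⟨0, hn⟩) + Real.sin t • u (Fin.natAdd n ⟨0, hm⟩)
  else u (Fin.castAdd m j)

lemma vfam_orthonormal (hn : 1 ≤ n) (hm : 1 ≤ m)
    (u : Fin (n + m) → EuclideanSpace ℝ (Fin (n + m))) (hu : Orthonormal ℝ u) (t : ℝ) :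
    Orthonormal ℝ (vfam hn hm u t) := by
  have hu' := orthonormal_iff_ite.mp hu
  rw [orthonormal_iff_ite]
  intro i j
  have hne : Fin.castAdd m ⟨0, hn⟩ ≠ Fin.natAdd n ⟨0, hm⟩ := by
    simp only [Ne, Fin.ext_iff, Fin.coe_castAdd, Fin.coe_natAdd]
    omega
  have hne2 : ∀ j : Fin n, (j : ℕ) ≠ 0 → Fin.castAdd m ⟨0, hn⟩ ≠ Fin.castAdd m j := by
    intro j hj
    simp only [Ne, Fin.ext_iff, Fin.coe_castAdd]
    omega
  have hne3 : ∀ j : Fin n, Fin.natAdd n ⟨0, hm⟩ ≠ Fin.castAdd m j := by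
    intro j
    simp only [Ne, Fin.ext_iff, Fin.coe_castAdd, Fin.coe_natAdd]
    omega
  by_cases hi : (i : ℕ) = 0 <;> by_cases hj : (j : ℕ) = 0
  · have hij : i = j := Fin.ext (by omega)
    subst hij
    rw [if_pos rfl]
    simp only [vfam, if_pos hi]
    simp only [inner_add_left, inner_add_right, real_inner_smul_left, real_inner_smul_right,
      hu']
    rw [if_neg hne, if_neg (Ne.symm hne)]
    simp only [if_true]
    nlinarith [Real.sin_sq_add_cos_sq t]
  · have hij : i ≠ j := fun h => hj (h ▸ hi)
    rw [if_neg hij]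
    simp only [vfam, if_pos hi, if_neg hj]
    simp only [inner_add_left, real_inner_smul_left, hu']
    rw [if_neg (hne2 j hj), if_neg (hne3 j)]
    ring
  · have hij : i ≠ j := fun h => hi (h ▸ hj)
    rw [if_neg hij]
    simp only [vfam, if_pos hj, if_neg hi]
    simp only [inner_add_right, real_inner_smul_right, hu']
    rw [if_neg (Ne.symm (hne2 i hi)), if_neg (Ne.symm (hne3 i))]
    ring
  · simp only [vfam, if_neg hi, if_neg hj]
    rw [hu']
    by_cases hij : i = j
    · subst hij; rw [if_pos rfl, if_pos rfl]
    · rw [if_neg hij, if_neg (fun h => hij (Fin.ext (by simpa using congrArg Fin.val h)))]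

lemma det_vfam (hn : 1 ≤ n) (hm : 1 ≤ m)
    (u : Fin (n + m) → EuclideanSpace ℝ (Fin (n + m)))
    (s : Fin n → EuclideanSpace ℝ (Fin (n + m))) (t : ℝ) :
    (Gmat s (vfam hn hm u t)).det =
      Real.cos t * (Matrix.of fun i j : Fin n =>
        (inner ℝ (s i) (u (Fin.castAdd m j)) : ℝ)).det +
      Real.sin t * (Matrix.of fun i j : Fin n =>
        (inner ℝ (s i) (if (j : ℕ) = 0 then u (Fin.natAdd n ⟨0, hm⟩)
          else u (Fin.castAdd m j)) : ℝ)).det := by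
  set A : Matrix (Fin n) (Fin n) ℝ :=
    Matrix.of fun i j : Fin n => (inner ℝ (s i) (u (Fin.castAdd m j)) : ℝ) with hA
  set a : Fin n → ℝ := fun i => (inner ℝ (s i) (u (Fin.castAdd m ⟨0, hn⟩)) : ℝ) with ha
  set b : Fin n → ℝ := fun i => (inner ℝ (s i) (u (Fin.natAdd n ⟨0, hm⟩)) : ℝ) with hb
  have e1 : A = A.updateCol ⟨0, hn⟩ a := by
    apply Matrix.ext
    intro i j
    rw [Matrix.updateCol_apply]
    by_cases hj : j = (⟨0, hn⟩ : Fin n)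
    · subst hj; rw [if_pos rfl]; rfl
    · rw [if_neg hj]
  have e2 : (Matrix.of fun i j : Fin n =>
      (inner ℝ (s i) (if (j : ℕ) = 0 then u (Fin.natAdd n ⟨0, hm⟩)
        else u (Fin.castAdd m j)) : ℝ)) = A.updateCol ⟨0, hn⟩ b := by
    apply Matrix.ext
    intro i j
    rw [Matrix.updateCol_apply, Matrix.of_apply]
    by_cases hj : j = (⟨0, hn⟩ : Fin n)
    · subst hj; rw [if_pos rfl, if_pos rfl]
    · have hj' : (j : ℕ) ≠ 0 := fun h => hj (Fin.ext h)
      rw [if_neg hj, if_neg hj']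
      rfl
  have e3 : Gmat s (vfam hn hm u t) =
      A.updateCol ⟨0, hn⟩ (Real.cos t • a + Real.sin t • b) := by
    apply Matrix.ext
    intro i j
    rw [Matrix.updateCol_apply]
    by_cases hj : j = (⟨0, hn⟩ : Fin n)
    · subst hj
      rw [if_pos rfl]
      simp only [Gmat, Matrix.of_apply, vfam, if_true]
      rw [inner_add_right, real_inner_smul_right, real_inner_smul_right]
      simp only [Pi.add_apply, Pi.smul_apply, smul_eq_mul]
      rfl
    · have hj' : (j : ℕ) ≠ 0 := fun h => hj (Fin.ext h)
      rw [if_neg hj]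
      simp only [Gmat, Matrix.of_apply, vfam, if_neg hj']
      rfl
  rw [e3, Matrix.det_updateCol_add, Matrix.det_updateCol_smul,
    Matrix.det_updateCol_smul, ← e1, ← e2]

end Setup

end SMapAux

/-- **The S-map has image in the closed unit disk** (Section 2). Given an orthonormal basis
`u_1, …, u_{n+m}` of `ℝ^{n+m}` and the S-orthogonal pair `P₀ = span(u_1, …, u_n)`,
`Q = span(u_{n+1}, u_2, …, u_n)`, for every `n`-dimensional subspace `S` with orthonormal
basis `s_1, …, s_n` the Gram determinants `x₁ = det⟨s_i, (u_1, u_2, …, u_n)_j⟩` and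
`x₂ = det⟨s_i, (u_{n+1}, u_2, …, u_n)_j⟩` satisfy `x₁² + x₂² ≤ 1`, with equality iff
`S = span(cos t·u_1 + sin t·u_{n+1}, u_2, …, u_n)` for some `t ∈ ℝ`. -/
theorem s_map_into_unit_disk {n m : ℕ} (hn : 1 ≤ n) (hm : 1 ≤ m)
    (u : Fin (n + m) → EuclideanSpace ℝ (Fin (n + m)))
    (hu : Orthonormal ℝ u)
    (hu_basis : Submodule.span ℝ (Set.range u) = ⊤)
    (s : Fin n → EuclideanSpace ℝ (Fin (n + m))) (hs : Orthonormal ℝ s)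
    (x₁ x₂ : ℝ)
    (hx₁ : x₁ = (Matrix.of fun i j : Fin n =>
      (inner ℝ (s i) (u (Fin.castAdd m j)) : ℝ)).det)
    (hx₂ : x₂ = (Matrix.of fun i j : Fin n =>
      (inner ℝ (s i) (if (j : ℕ) = 0 then u (Fin.natAdd n ⟨0, hm⟩)
        else u (Fin.castAdd m j)) : ℝ)).det) :
    x₁ ^ 2 + x₂ ^ 2 ≤ 1 ∧
    (x₁ ^ 2 + x₂ ^ 2 = 1 ↔ ∃ t : ℝ,
      Submodule.span ℝ (Set.range s) =
        Submodule.span ℝ (Set.range fun j : Fin n =>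
          if (j : ℕ) = 0 then
            Real.cos t • u (Fin.castAdd m ⟨0, hn⟩) + Real.sin t • u (Fin.natAdd n ⟨0, hm⟩)
          else u (Fin.castAdd m j))) := by
  have hvon : ∀ t, Orthonormal ℝ (SMapAux.vfam hn hm u t) :=
    SMapAux.vfam_orthonormal hn hm u hu
  have hdet : ∀ t, (SMapAux.Gmat s (SMapAux.vfam hn hm u t)).det
      = Real.cos t * x₁ + Real.sin t * x₂ := by
    intro t
    rw [SMapAux.det_vfam hn hm u s t, ← hx₁, ← hx₂]
  have hrange : ∀ t : ℝ, (Set.range fun j : Fin n =>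
      if (j : ℕ) = 0 then
        Real.cos t • u (Fin.castAdd m ⟨0, hn⟩) + Real.sin t • u (Fin.natAdd n ⟨0, hm⟩)
      else u (Fin.castAdd m j)) = Set.range (SMapAux.vfam hn hm u t) := fun t => rfl
  have key : ∀ t : ℝ, (Real.cos t * x₁ + Real.sin t * x₂) ^ 2 ≤ 1 := by
    intro t
    have h := SMapAux.det_sq_le_one s (SMapAux.vfam hn hm u t) hs (hvon t)
    rwa [hdet t] at h
  have hineq : x₁ ^ 2 + x₂ ^ 2 ≤ 1 := by
    rcases eq_or_ne (x₁ ^ 2 + x₂ ^ 2) 0 with h0 | h0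
    · rw [h0]; norm_num
    · set c : ℂ := ⟨x₁, x₂⟩ with hc
      have hcre : c.re = x₁ := rfl
      have hcim : c.im = x₂ := rfl
      have hc0 : c ≠ 0 := by
        intro h
        apply h0
        have h1 : x₁ = 0 := by rw [← hcre, h]; rfl
        have h2 : x₂ = 0 := by rw [← hcim, h]; rfl
        rw [h1, h2]; ring
      have habs : 0 < ‖c‖ := norm_pos_iff.mpr hc0
      have hsq : (‖c‖) ^ 2 = x₁ ^ 2 + x₂ ^ 2 := by
        rw [Complex.sq_norm, Complex.normSq_apply, hcre, hcim]; ring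
      have hval : Real.cos (Complex.arg c) * x₁ + Real.sin (Complex.arg c) * x₂
          = ‖c‖ := by
        rw [Complex.cos_arg hc0, Complex.sin_arg, hcre, hcim]
        field_simp
        nlinarith [hsq]
      have h := key (Complex.arg c)
      rw [hval] at h
      linarith
  refine ⟨hineq, ?_, ?_⟩
  · intro h1
    set c : ℂ := ⟨x₁, x₂⟩ with hc
    have hcre : c.re = x₁ := rfl
    have hcim : c.im = x₂ := rfl
    have hc0 : c ≠ 0 := by
      intro h
      have h2 : x₁ = 0 := by rw [← hcre, h]; rfl
      have h3 : x₂ = 0 := by rw [← hcim, h]; rfl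
      rw [h2, h3] at h1
      norm_num at h1
    have hsq : (‖c‖) ^ 2 = x₁ ^ 2 + x₂ ^ 2 := by
      rw [Complex.sq_norm, Complex.normSq_apply, hcre, hcim]; ring
    have habs1 : ‖c‖ = 1 := by
      nlinarith [norm_nonneg c]
    have hcos : Real.cos (Complex.arg c) = x₁ := by
      rw [Complex.cos_arg hc0, habs1, hcre, div_one]
    have hsin : Real.sin (Complex.arg c) = x₂ := by
      rw [Complex.sin_arg, habs1, hcim, div_one]
    have hd : (SMapAux.Gmat s (SMapAux.vfam hn hm u (Complex.arg c))).det = 1 := by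
      rw [hdet, hcos, hsin]
      linear_combination h1
    have hdsq : (SMapAux.Gmat s (SMapAux.vfam hn hm u (Complex.arg c))).det ^ 2 = 1 := by
      rw [hd]; norm_num
    have hle1 := SMapAux.span_le_of_det_sq_eq_one s _ hs (hvon _) hdsq
    have htrans : SMapAux.Gmat (SMapAux.vfam hn hm u (Complex.arg c)) s
        = (SMapAux.Gmat s (SMapAux.vfam hn hm u (Complex.arg c)))ᵀ := by
      apply Matrix.ext
      intro i j
      simp only [SMapAux.Gmat, Matrix.of_apply, Matrix.transpose_apply]
      exact real_inner_comm _ _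
    have hdsq2 : (SMapAux.Gmat (SMapAux.vfam hn hm u (Complex.arg c)) s).det ^ 2 = 1 := by
      rw [htrans, Matrix.det_transpose, hd]; norm_num
    have hle2 := SMapAux.span_le_of_det_sq_eq_one _ s (hvon _) hs hdsq2
    exact ⟨Complex.arg c, by rw [hrange (Complex.arg c)]; exact le_antisymm hle1 hle2⟩
  · rintro ⟨t, hspan⟩
    rw [hrange t] at hspan
    have hmem : ∀ i, s i ∈ Submodule.span ℝ (Set.range (SMapAux.vfam hn hm u t)) := by
      intro i
      rw [← hspan]
      exact Submodule.subset_span ⟨i, rfl⟩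
    have hd := SMapAux.det_sq_eq_one_of_le s _ hs (hvon t) hmem
    rw [hdet t] at hd
    have hge : 1 ≤ x₁ ^ 2 + x₂ ^ 2 := by
      nlinarith [sq_nonneg (Real.sin t * x₁ - Real.cos t * x₂), Real.sin_sq_add_cos_sq t]
    linarith
end
end
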